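/- Main theorem for ℜ_d: for every formula φ of 𝓛, the following three statements are equivalent: (1) φ is a tautology of the enumeration ξ of deterministic partial recursive functions; (2) w ⊩ φ for every world w of every deterministic Kripke model; (3) ⊢_{ℜ_d} φ. -/

import Mathlib

/-- Formulas of the modal language 𝓛: propositional variables, ⊥, →, and ▷. -/
inductive Formula : Type
  | var : ℕ → Formula
  | bot : Formula
  | imp : Formula → Formula → Formula
  | tri : Formula → Formula → Formula
deriving DecidableEq

namespace Formula

/-- ¬φ := φ → ⊥ -/
def neg (φ : Formula) : Formula := imp φ bot
/-- ⊤ := ¬⊥ -/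
def top : Formula := neg bot
/-- φ ∨ ψ := ¬φ → ψ -/
def disj (φ ψ : Formula) : Formula := imp (neg φ) ψ
/-- φ ∧ ψ := ¬(φ → ¬ψ) -/
def conj (φ ψ : Formula) : Formula := neg (imp φ (neg ψ))

/-- `φ` is a substitution instance of a classical propositional tautology:
it evaluates to `true` under every boolean valuation of formulas that
respects `⊥` and `→` (variables and `▷`-formulas are treated as atoms). -/
def IsPropTaut (φ : Formula) : Prop :=
  ∀ v : Formula → Bool, v bot = false →
    (∀ a b, v (imp a b) = (!(v a) || v b)) → v φ = true

/-- Hilbert-style provability.  `Prv false` is the logic ℜ (axioms: classical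
tautologies, A1, A2, A3; rules: Modus Ponens and monotonicity M);
`Prv true` is the logic ℜ_d, which additionally has axiom A4. -/
inductive Prv : Bool → Formula → Prop
  | taut {d : Bool} {φ} : IsPropTaut φ → Prv d φ
  | a1 {d : Bool} (φ ψ χ) : Prv d (imp (tri φ ψ) (imp (tri χ ψ) (tri (disj φ χ) ψ)))
  | a2 {d : Bool} (φ) : Prv d (tri bot φ)
  | a3 {d : Bool} (φ) : Prv d (tri φ top)
  | a4 (φ ψ χ) : Prv true (imp (tri φ ψ) (imp (tri φ χ) (tri φ (conj ψ χ))))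
  | mp {d : Bool} {φ ψ} : Prv d (imp φ ψ) → Prv d φ → Prv d ψ
  | mono {d : Bool} {φ₁ φ₂ ψ₁ ψ₂} : Prv d (imp φ₁ φ₂) → Prv d (imp ψ₁ ψ₂) →
      Prv d (imp (tri φ₂ ψ₁) (tri φ₁ ψ₂))

/-- `Deriv d Δ φ`: φ is derivable from the hypotheses Δ together with all
theorems of the logic (`Prv d`) using only Modus Ponens. -/
inductive Deriv (d : Bool) (Δ : Set Formula) : Formula → Prop
  | hyp {φ} : φ ∈ Δ → Deriv d Δ φ
  | thm {φ} : Prv d φ → Deriv d Δ φ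
  | mp {φ ψ} : Deriv d Δ (imp φ ψ) → Deriv d Δ φ → Deriv d Δ ψ

/-- Conjunction of a list of formulas (empty conjunction is ⊤). -/
def conjList : List Formula → Formula
  | [] => top
  | φ :: l => conj φ (conjList l)

/-- ⋀Γ : conjunction of all formulas of a finite set Γ (⋀∅ = ⊤). -/
noncomputable def bigConj (Γ : Finset Formula) : Formula := conjList Γ.toList

/-- A set of formulas is consistent if ⊥ is not derivable from it. -/
def Consistent (d : Bool) (Δ : Set Formula) : Prop := ¬ Deriv d Δ bot

/-- The pair (u,v) is w-consistent: w ⊬ ⋀u ▷ ¬⋀v. -/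
def WCons (d : Bool) (w : Set Formula) (u v : Finset Formula) : Prop :=
  ¬ Deriv d w (tri (bigConj u) (neg (bigConj v)))

/-- The operation ∼: ∼(¬φ) = φ, and ∼φ = ¬φ if φ is not a negation. -/
def simNeg : Formula → Formula
  | imp φ bot => φ
  | φ => neg φ

/-- Φ is closed under subformulas. -/
def SubClosed (Φ : Finset Formula) : Prop :=
  (∀ a b, imp a b ∈ Φ → a ∈ Φ ∧ b ∈ Φ) ∧ (∀ a b, tri a b ∈ Φ → a ∈ Φ ∧ b ∈ Φ)

/-- Φ is closed under the operation ∼. -/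
def SimClosed (Φ : Finset Formula) : Prop := ∀ φ ∈ Φ, simNeg φ ∈ Φ

/-- w is a maximal consistent subset of Φ: w ⊆ Φ, w is consistent, and for
every φ ∈ Φ either φ ∈ w or ∼φ ∈ w. -/
def MaxCons (d : Bool) (Φ : Finset Formula) (w : Finset Formula) : Prop :=
  w ⊆ Φ ∧ Consistent d ↑w ∧ ∀ φ ∈ Φ, φ ∈ w ∨ simNeg φ ∈ w

/-- Kripke forcing: `rel w u v` means u →_w v, `val w p` means w ⊩ p. -/
def Forces {W : Type*} (rel : W → W → W → Prop) (val : W → ℕ → Prop) :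
    W → Formula → Prop
  | w, var p => val w p
  | _, bot => False
  | w, imp a b => Forces rel val w a → Forces rel val w b
  | w, tri a b => ∀ u v, rel w u v → Forces rel val u a →
      ∃ v', rel w u v' ∧ Forces rel val v' b

end Formula

/-- A Kripke model: a finite set of worlds, a ternary computability relation,
and a forcing relation between worlds and propositional variables. -/
structure KripkeModel where
  W : Type
  fin : Finite W
  rel : W → W → W → Prop
  val : W → ℕ → Prop

/-- A Kripke model is deterministic if for all worlds w, u there is at most
one v with u →_w v. -/
def KripkeModel.Deterministic (M : KripkeModel) : Prop :=
  ∀ w u v v', M.rel w u v → M.rel w u v' → v = v'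

/-- Forcing in a Kripke model. -/
def KripkeModel.Forces (M : KripkeModel) : M.W → Formula → Prop :=
  Formula.Forces M.rel M.val

/-- The standard enumeration of nondeterministic partial recursive functions:
ζ_w(u) = the set of possible outputs of machine (code) w on input u. -/
def zeta (w u : ℕ) : Set ℕ :=
  {v | ((Denumerable.ofNat Nat.Partrec.Code w).eval (Nat.pair u v)).Dom}

/-- The standard enumeration of deterministic partial recursive functions:
ξ_w(u) = the value of the partial recursive function with code w on input u. -/
def xi (w u : ℕ) : Part ℕ :=
  (Denumerable.ofNat Nat.Partrec.Code w).eval u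

namespace Formula

/-- Set semantics for nondeterministic partial recursive functions
(existential reading of ▷). -/
def semN (val : ℕ → Set ℕ) : Formula → Set ℕ
  | var p => val p
  | bot => ∅
  | imp a b => (Set.univ \ semN val a) ∪ semN val b
  | tri a b => {w | ∀ u ∈ semN val a, zeta w u ≠ ∅ → zeta w u ∩ semN val b ≠ ∅}

/-- Set semantics for deterministic partial recursive functions. -/
def semD (val : ℕ → Set ℕ) : Formula → Set ℕ
  | var p => val p
  | bot => ∅
  | imp a b => (Set.univ \ semD val a) ∪ semD val b
  | tri a b => {w | ∀ u ∈ semD val a, ∀ h : (xi w u).Dom, (xi w u).get h ∈ semD val b}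

/-- Universal set semantics for nondeterministic partial recursive functions:
every terminating computation path from φ* ends in ψ*. -/
def semU (val : ℕ → Set ℕ) : Formula → Set ℕ
  | var p => val p
  | bot => ∅
  | imp a b => (Set.univ \ semU val a) ∪ semU val b
  | tri a b => {w | ∀ u ∈ semU val a, zeta w u ⊆ semU val b}

/-- A canonical injective encoding of formulas as natural numbers. -/
def enc : Formula → ℕ
  | var n => 4 * n
  | bot => 1
  | imp a b => 4 * Nat.pair (enc a) (enc b) + 2
  | tri a b => 4 * Nat.pair (enc a) (enc b) + 3

end Formula


/-! ### Auxiliary development -/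

namespace Formula

/-- Disjunction of a list of formulas (empty disjunction is ⊥). -/
def disjList : List Formula → Formula
  | [] => bot
  | φ :: l => disj φ (disjList l)

section BoolEval

variable {v : Formula → Bool}

lemma bv_neg (hbot : v bot = false) (himp : ∀ a b, v (imp a b) = (!(v a) || v b))
    (a : Formula) : v (neg a) = !(v a) := by
  simp [neg, himp, hbot]

lemma bv_top (hbot : v bot = false) (himp : ∀ a b, v (imp a b) = (!(v a) || v b)) :
    v top = true := by simp [top, bv_neg hbot himp, hbot]

lemma bv_conj (hbot : v bot = false) (himp : ∀ a b, v (imp a b) = (!(v a) || v b))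
    (a b : Formula) : v (conj a b) = (v a && v b) := by
  simp [conj, bv_neg hbot himp, himp]

lemma bv_disj (hbot : v bot = false) (himp : ∀ a b, v (imp a b) = (!(v a) || v b))
    (a b : Formula) : v (disj a b) = (v a || v b) := by
  simp [disj, bv_neg hbot himp, himp]

lemma bv_conjList (hbot : v bot = false) (himp : ∀ a b, v (imp a b) = (!(v a) || v b))
    (l : List Formula) : v (conjList l) = l.all (fun x => v x) := by
  induction l with
  | nil => simpa [conjList] using bv_top hbot himp
  | cons a l ih => simp [conjList, bv_conj hbot himp, ih]

lemma bv_disjList (hbot : v bot = false) (himp : ∀ a b, v (imp a b) = (!(v a) || v b))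
    (l : List Formula) : v (disjList l) = l.any (fun x => v x) := by
  induction l with
  | nil => simp [disjList, hbot]
  | cons a l ih => simp [disjList, bv_disj hbot himp, ih]

lemma bv_bigConj (hbot : v bot = false) (himp : ∀ a b, v (imp a b) = (!(v a) || v b))
    (s : Finset Formula) : v (bigConj s) = true ↔ ∀ x ∈ s, v x = true := by
  simp [bigConj, bv_conjList hbot himp, List.all_eq_true, Finset.mem_toList]

lemma bv_simNeg (hbot : v bot = false) (himp : ∀ a b, v (imp a b) = (!(v a) || v b))
    (a : Formula) : v (simNeg a) = !(v a) := by
  cases a with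
  | var n => simp [simNeg, bv_neg hbot himp]
  | bot => simp [simNeg, bv_neg hbot himp]
  | tri a b => simp [simNeg, bv_neg hbot himp]
  | imp a b =>
      cases b with
      | bot => simp [simNeg, himp, hbot]
      | var n => simp [simNeg, bv_neg hbot himp]
      | imp c d => simp [simNeg, bv_neg hbot himp]
      | tri c d => simp [simNeg, bv_neg hbot himp]

end BoolEval

lemma simNeg_tri (a b : Formula) : simNeg (tri a b) = neg (tri a b) := rfl

/-! ### Basic facts about `Deriv` -/

lemma Deriv.mono_set {d : Bool} {Δ Δ' : Set Formula} {φ : Formula} (h : Δ ⊆ Δ')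
    (hd : Deriv d Δ φ) : Deriv d Δ' φ := by
  induction hd with
  | hyp h' => exact Deriv.hyp (h h')
  | thm h' => exact Deriv.thm h'
  | mp _ _ ih1 ih2 => exact Deriv.mp ih1 ih2

lemma Deriv.of_prv_empty {d : Bool} {φ : Formula} (h : Deriv d ∅ φ) : Prv d φ := by
  induction h with
  | hyp h' => exact absurd h' (Set.notMem_empty _)
  | thm h' => exact h'
  | mp _ _ ih1 ih2 => exact Prv.mp ih1 ih2

/-- The deduction theorem for `Deriv`. -/
lemma Deriv.deduction {d : Bool} {Δ : Set Formula} {ψ χ : Formula}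
    (h : Deriv d (insert ψ Δ) χ) : Deriv d Δ (imp ψ χ) := by
  induction h with
  | @hyp φ h' =>
      rcases h' with h' | h'
      · subst h'
        exact Deriv.thm (Prv.taut (fun v hb hi => by
          simp only [hi]
          cases v φ <;> simp))
      · refine Deriv.mp (Deriv.thm (Prv.taut (fun v hb hi => ?_))) (Deriv.hyp h')
        simp only [hi]
        cases v φ <;> cases v ψ <;> simp
  | @thm φ h' =>
      refine Deriv.mp (Deriv.thm (Prv.taut (fun v hb hi => ?_))) (Deriv.thm h')
      simp only [hi]
      cases v φ <;> cases v ψ <;> simp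
  | @mp α β _ _ ih1 ih2 =>
      refine Deriv.mp (Deriv.mp (Deriv.thm (Prv.taut (fun v hb hi => ?_))) ih1) ih2
      simp only [hi]
      cases v ψ <;> cases v α <;> cases v β <;> simp

/-- Deduction over a list of hypotheses. -/
lemma Deriv.conj_deduction {d : Bool} {χ : Formula} :
    ∀ (l : List Formula), Deriv d {x | x ∈ l} χ → Prv d (imp (conjList l) χ)
  | [], h => by
      have h0 : Prv d χ := Deriv.of_prv_empty (by simpa using h)
      refine Prv.mp (Prv.taut (fun v hb hi => ?_)) h0
      simp only [hi]
      cases hχ : v χ <;> cases v (conjList []) <;> simp [hχ]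
  | (a :: l), h => by
      have h1 : Deriv d (insert a {x | x ∈ l}) χ := by
        apply Deriv.mono_set _ h
        intro x hx
        simp at hx ⊢
        tauto
      have h2 : Prv d (imp (conjList l) (imp a χ)) :=
        Deriv.conj_deduction l (Deriv.deduction h1)
      refine Prv.mp (Prv.taut (fun v hb hi => ?_)) h2
      simp only [hi, conjList, bv_conj hb hi]
      cases v a <;> cases v (conjList l) <;> cases v χ <;> simp

/-- Deduction over a finite set of hypotheses. -/
lemma Deriv.finset_deduction {d : Bool} {χ : Formula} {s : Finset Formula}
    (h : Deriv d ↑s χ) : Prv d (imp (bigConj s) χ) := by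
  apply Deriv.conj_deduction s.toList
  apply Deriv.mono_set _ h
  intro x hx
  simpa using hx

end Formula

/-! ### Part III : canonical model completeness -/

namespace Formula

lemma triConjList {Δ : Set Formula} {γ : Formula} :
    ∀ {l : List Formula}, (∀ χ ∈ l, Deriv true Δ (tri γ χ)) →
      Deriv true Δ (tri γ (conjList l))
  | [], _ => Deriv.thm (Prv.a3 γ)
  | (χ :: l), h =>
      Deriv.mp (Deriv.mp (Deriv.thm (Prv.a4 γ χ (conjList l))) (h χ (by simp)))
        (triConjList (fun x hx => h x (by simp [hx])))

lemma triBigConj {Δ : Set Formula} {γ : Formula} {s : Finset Formula}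
    (h : ∀ χ ∈ s, Deriv true Δ (tri γ χ)) : Deriv true Δ (tri γ (bigConj s)) :=
  triConjList (fun x hx => h x (Finset.mem_toList.1 hx))

lemma triDisjList {Δ : Set Formula} {b : Formula} {d : Bool} :
    ∀ {l : List Formula}, (∀ x ∈ l, Deriv d Δ (tri x b)) →
      Deriv d Δ (tri (disjList l) b)
  | [], _ => Deriv.thm (Prv.a2 b)
  | (x :: l), h =>
      Deriv.mp (Deriv.mp (Deriv.thm (Prv.a1 x b (disjList l))) (h x (by simp)))
        (triDisjList (l := l) (fun y hy => h y (by simp [hy])))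

open Classical in
/-- The list of all "maximal" subsets of Φ containing a. -/
noncomputable def maxSets (Φ : Finset Formula) (a : Formula) : List (Finset Formula) :=
  (Φ.powerset.filter (fun m => a ∈ m ∧ ∀ χ ∈ Φ, χ ∈ m ∨ simNeg χ ∈ m)).toList

lemma mem_maxSets {Φ : Finset Formula} {a : Formula} {m : Finset Formula} :
    m ∈ maxSets Φ a ↔ m ⊆ Φ ∧ a ∈ m ∧ ∀ χ ∈ Φ, χ ∈ m ∨ simNeg χ ∈ m := by
  simp [maxSets, Finset.mem_filter, Finset.mem_powerset, and_assoc]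

/-- Every formula of Φ implies the disjunction of the maximal subsets containing it. -/
lemma cover_taut {Φ : Finset Formula} (hsim : SimClosed Φ) {a : Formula} (ha : a ∈ Φ) :
    IsPropTaut (imp a (disjList ((maxSets Φ a).map bigConj))) := by
  classical
  intro v hb hi
  simp only [hi, bv_disjList hb hi]
  cases hva : v a with
  | false => simp
  | true =>
      have hex : ∃ x ∈ (maxSets Φ a).map bigConj, v x = true := by
        refine ⟨bigConj (Φ.filter (fun χ => v χ = true)), List.mem_map.2 ⟨_, ?_, rfl⟩, ?_⟩
        · refine mem_maxSets.2 ⟨Finset.filter_subset _ _, Finset.mem_filter.2 ⟨ha, hva⟩, ?_⟩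
          intro χ hχ
          cases hvχ : v χ with
          | true => exact Or.inl (Finset.mem_filter.2 ⟨hχ, hvχ⟩)
          | false =>
              refine Or.inr (Finset.mem_filter.2 ⟨hsim χ hχ, ?_⟩)
              rw [bv_simNeg hb hi, hvχ]; rfl
        · exact (bv_bigConj hb hi _).2 (fun x hx => (Finset.mem_filter.1 hx).2)
      simp only [Bool.not_true, Bool.false_or, List.any_eq_true]
      simpa using hex

open Classical in
/-- The set of formulas χ of Φ with w ⊢ ⋀u ▷ χ. -/
noncomputable def Dset (Φ : Finset Formula) (w u : Finset Formula) : Finset Formula :=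
  Φ.filter (fun χ => Deriv true ↑w (tri (bigConj u) χ))

lemma mem_Dset {Φ w u : Finset Formula} {χ : Formula} :
    χ ∈ Dset Φ w u ↔ χ ∈ Φ ∧ Deriv true ↑w (tri (bigConj u) χ) := by
  classical
  simp only [Dset, Finset.mem_filter]

/-- Lindenbaum lemma, list version. -/
lemma lindenbaum_list {Φ : Finset Formula} (hsim : SimClosed Φ) :
    ∀ (L : List Formula), (∀ χ ∈ L, χ ∈ Φ) → ∀ (S : Finset Formula), S ⊆ Φ →
      Consistent true ↑S → ∃ w : Finset Formula, S ⊆ w ∧ w ⊆ Φ ∧ Consistent true ↑w ∧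
        ∀ χ ∈ L, χ ∈ w ∨ simNeg χ ∈ w
  | [], _, S, hS, hc => ⟨S, le_refl _, hS, hc, by simp⟩
  | (χ :: L), hL, S, hS, hc => by
      classical
      have hχΦ : χ ∈ Φ := hL χ (by simp)
      have hL' : ∀ x ∈ L, x ∈ Φ := fun x hx => hL x (by simp [hx])
      by_cases h1 : Consistent true ↑(insert χ S)
      · obtain ⟨w, hSw, hwΦ, hwc, hmax⟩ :=
          lindenbaum_list hsim L hL' (insert χ S) (Finset.insert_subset hχΦ hS) h1
        refine ⟨w, (Finset.subset_insert _ _).trans hSw, hwΦ, hwc, ?_⟩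
        intro x hx
        rcases List.mem_cons.1 hx with rfl | hx
        · exact Or.inl (hSw (Finset.mem_insert_self _ _))
        · exact hmax x hx
      · have hder1 : Deriv true (insert χ ↑S) bot := by
          have := not_not.mp h1
          rwa [Finset.coe_insert] at this
        have h2 : Consistent true ↑(insert (simNeg χ) S) := by
          intro hder
          rw [Finset.coe_insert] at hder
          apply hc
          have d1 : Deriv true ↑S (imp χ bot) := Deriv.deduction hder1
          have d2 : Deriv true ↑S (imp (simNeg χ) bot) := Deriv.deduction hder
          refine Deriv.mp (Deriv.mp (Deriv.thm (Prv.taut fun v hb hi => ?_)) d1) d2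
          simp only [hi, bv_simNeg hb hi, hb]
          cases v χ <;> simp
        obtain ⟨w, hSw, hwΦ, hwc, hmax⟩ :=
          lindenbaum_list hsim L hL' (insert (simNeg χ) S)
            (Finset.insert_subset (hsim χ hχΦ) hS) h2
        refine ⟨w, (Finset.subset_insert _ _).trans hSw, hwΦ, hwc, ?_⟩
        intro x hx
        rcases List.mem_cons.1 hx with rfl | hx
        · exact Or.inr (hSw (Finset.mem_insert_self _ _))
        · exact hmax x hx

/-- Lindenbaum lemma. -/
lemma lindenbaum {Φ : Finset Formula} (hsim : SimClosed Φ) {S : Finset Formula}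
    (hS : S ⊆ Φ) (hc : Consistent true ↑S) :
    ∃ w : Finset Formula, MaxCons true Φ w ∧ S ⊆ w := by
  obtain ⟨w, hSw, hwΦ, hwc, hmax⟩ := lindenbaum_list hsim Φ.toList
    (fun x hx => Finset.mem_toList.1 hx) S hS hc
  exact ⟨w, ⟨hwΦ, hwc, fun χ hχ => hmax χ (Finset.mem_toList.2 hχ)⟩, hSw⟩

/-- Membership in a maximal consistent set is equivalent to derivability. -/
lemma mem_iff_deriv {Φ w : Finset Formula} (hw : MaxCons true Φ w) {χ : Formula}
    (hχ : χ ∈ Φ) : χ ∈ w ↔ Deriv true ↑w χ := by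
  constructor
  · exact fun h => Deriv.hyp (Finset.mem_coe.2 h)
  · intro hd
    by_contra hmem
    rcases hw.2.2 χ hχ with h | h
    · exact hmem h
    · apply hw.2.1
      refine Deriv.mp (Deriv.mp (Deriv.thm (Prv.taut fun v hb hi => ?_)) hd)
        (Deriv.hyp (Finset.mem_coe.2 h))
      simp only [hi, bv_simNeg hb hi, hb]
      cases v χ <;> simp

lemma mem_imp_iff {Φ w : Finset Formula} (hsub : SubClosed Φ) (hw : MaxCons true Φ w)
    {a b : Formula} (h : imp a b ∈ Φ) : imp a b ∈ w ↔ (a ∈ w → b ∈ w) := by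
  obtain ⟨ha, hb'⟩ := hsub.1 a b h
  rw [mem_iff_deriv hw h, mem_iff_deriv hw ha, mem_iff_deriv hw hb']
  constructor
  · exact fun hd hda => Deriv.mp hd hda
  · intro hcl
    by_cases hda : Deriv true ↑w a
    · refine Deriv.mp (Deriv.thm (Prv.taut fun v hbb hi => ?_)) (hcl hda)
      simp only [hi]
      cases v a <;> cases v b <;> simp
    · have hna : simNeg a ∈ w := by
        rcases hw.2.2 a ha with h' | h'
        · exact absurd (Deriv.hyp (Finset.mem_coe.2 h')) hda
        · exact h'
      refine Deriv.mp (Deriv.thm (Prv.taut fun v hbb hi => ?_))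
        (Deriv.hyp (Finset.mem_coe.2 hna))
      simp only [hi, bv_simNeg hbb hi]
      cases v a <;> cases v b <;> simp

lemma bigConj_imp_taut {u : Finset Formula} {a : Formula} (ha : a ∈ u) :
    IsPropTaut (imp (bigConj u) a) := by
  intro v hb hi
  simp only [hi]
  cases hu : v (bigConj u) with
  | false => simp
  | true => simp [(bv_bigConj hb hi u).1 hu a ha]

lemma imp_self_taut (a : Formula) : IsPropTaut (imp a a) := by
  intro v hb hi
  simp only [hi]
  cases v a <;> simp

/-- If tri a b ∈ w and a ∈ u then b is in the Φ-theory of successors of u under w. -/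
lemma deriv_tri_bigConj {w : Set Formula} {u : Finset Formula} {a b : Formula}
    (hu : a ∈ u) (hd : Deriv true w (tri a b)) :
    Deriv true w (tri (bigConj u) b) :=
  Deriv.mp (Deriv.thm (Prv.mono (Prv.taut (bigConj_imp_taut hu)) (Prv.taut (imp_self_taut b)))) hd

/-- Key successor-existence lemma. -/
lemma succ_exists {Φ : Finset Formula} (hsim : SimClosed Φ) {w : Finset Formula}
    {a b : Formula} (ha : a ∈ Φ) (hnd : ¬ Deriv true ↑w (tri a b)) :
    ∃ u : Finset Formula, MaxCons true Φ u ∧ a ∈ u ∧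
      Consistent true ↑(insert (simNeg b) (Dset Φ w u)) := by
  classical
  by_contra hall
  push_neg at hall
  apply hnd
  have key : ∀ m ∈ maxSets Φ a, Deriv true ↑w (tri (bigConj m) b) := by
    intro m hm
    obtain ⟨hmΦ, ham, hmmax⟩ := mem_maxSets.1 hm
    by_cases hcm : Consistent true ↑m
    · have hmc : MaxCons true Φ m := ⟨hmΦ, hcm, hmmax⟩
      have hder : Deriv true ↑(insert (simNeg b) (Dset Φ w m)) bot :=
        not_not.mp (hall m hmc ham)
      have h3 : Prv true (imp (bigConj (insert (simNeg b) (Dset Φ w m))) bot) :=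
        Deriv.finset_deduction hder
      have h4 : Prv true (imp (bigConj (Dset Φ w m)) b) := by
        refine Prv.mp (Prv.taut fun v hb hi => ?_) h3
        simp only [hi, hb]
        cases hA : v (bigConj (insert (simNeg b) (Dset Φ w m))) with
        | true => simp [hA]
        | false =>
            cases hvb : v b with
            | true => simp [hvb]
            | false =>
                have hBf : v (bigConj (Dset Φ w m)) = false := by
                  by_contra hB
                  rw [Bool.not_eq_false] at hB
                  have : v (bigConj (insert (simNeg b) (Dset Φ w m))) = true := by
                    refine (bv_bigConj hb hi _).2 (fun x hx => ?_)
                    rcases Finset.mem_insert.1 hx with rfl | hxD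
                    · rw [bv_simNeg hb hi, hvb]; rfl
                    · exact (bv_bigConj hb hi _).1 hB x hxD
                  rw [this] at hA; exact absurd hA (by decide)
                simp [hBf]
      have h5 : Deriv true ↑w (tri (bigConj m) (bigConj (Dset Φ w m))) :=
        triBigConj (fun χ hχ => (mem_Dset.1 hχ).2)
      have h6 : Prv true (imp (tri (bigConj m) (bigConj (Dset Φ w m))) (tri (bigConj m) b)) :=
        Prv.mono (Prv.taut (imp_self_taut _)) h4
      exact Deriv.mp (Deriv.thm h6) h5
    · have h3 : Prv true (imp (bigConj m) bot) := Deriv.finset_deduction (not_not.mp hcm)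
      have h6 : Prv true (imp (tri bot b) (tri (bigConj m) b)) :=
        Prv.mono h3 (Prv.taut (imp_self_taut b))
      exact Deriv.thm (Prv.mp h6 (Prv.a2 b))
  have h7 : Deriv true ↑w (tri (disjList ((maxSets Φ a).map bigConj)) b) :=
    triDisjList (fun x hx => by
      rcases List.mem_map.1 hx with ⟨m, hm, rfl⟩
      exact key m hm)
  have h8 : Prv true (imp (tri (disjList ((maxSets Φ a).map bigConj)) b) (tri a b)) :=
    Prv.mono (Prv.taut (cover_taut hsim ha)) (Prv.taut (imp_self_taut b))
  exact Deriv.mp (Deriv.thm h8) h7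

end Formula

namespace Formula

lemma simNeg_contra_taut (b : Formula) : IsPropTaut (imp b (imp (simNeg b) bot)) := by
  intro v hb hi
  simp only [hi, bv_simNeg hb hi, hb]
  cases v b <;> simp

lemma notMem_of_simNeg_mem {Φ w : Finset Formula} (hw : MaxCons true Φ w) {χ : Formula}
    (h : simNeg χ ∈ w) (hd : Deriv true ↑w χ) : False :=
  hw.2.1 (Deriv.mp (Deriv.mp (Deriv.thm (Prv.taut (simNeg_contra_taut χ))) hd)
    (Deriv.hyp (Finset.mem_coe.2 h)))

open Classical in
/-- The canonical (chosen) successor. -/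
noncomputable def succOpt (Φ : Finset Formula) (w u : Finset Formula) (c : Formula) :
    Option (Finset Formula) :=
  if h : ∃ v : Finset Formula, MaxCons true Φ v ∧ Dset Φ w u ⊆ v ∧ c ∉ v then some h.choose
  else none

lemma succOpt_spec {Φ w u : Finset Formula} {c : Formula} {v : Finset Formula}
    (h : succOpt Φ w u c = some v) : MaxCons true Φ v ∧ Dset Φ w u ⊆ v ∧ c ∉ v := by
  classical
  by_cases h' : ∃ v : Finset Formula, MaxCons true Φ v ∧ Dset Φ w u ⊆ v ∧ c ∉ v
  · rw [succOpt, dif_pos h'] at h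
    obtain rfl : h'.choose = v := Option.some.inj h
    exact h'.choose_spec
  · rw [succOpt, dif_neg h'] at h
    exact absurd h (by simp)

lemma succOpt_eq_some {Φ w u : Finset Formula} {c : Formula}
    (h' : ∃ v : Finset Formula, MaxCons true Φ v ∧ Dset Φ w u ⊆ v ∧ c ∉ v) :
    ∃ v, succOpt Φ w u c = some v := by
  classical
  rw [succOpt, dif_pos h']
  exact ⟨_, rfl⟩

/-- Worlds of the canonical model. -/
def CWorld (Φ : Finset Formula) : Type :=
  {w : Finset Formula // MaxCons true Φ w} × {χ : Formula // χ ∈ Φ}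

instance CWorld.finite (Φ : Finset Formula) : Finite (CWorld Φ) := by
  have h1 : Finite {w : Finset Formula // MaxCons true Φ w} :=
    Finite.of_injective
      (fun w => (⟨w.1, Finset.mem_powerset.2 w.2.1⟩ : {x // x ∈ Φ.powerset}))
      (fun a b h => by
        rw [Subtype.mk.injEq] at h
        exact Subtype.ext h)
  unfold CWorld
  infer_instance

/-- The canonical computability relation. -/
def crel (Φ : Finset Formula) : CWorld Φ → CWorld Φ → CWorld Φ → Prop := fun s s₁ s₂ =>
  succOpt Φ s.1.1 s₁.1.1 s₁.2.1 = some s₂.1.1 ∧ s₂.2 = s₁.2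

/-- The canonical valuation. -/
def cval (Φ : Finset Formula) : CWorld Φ → ℕ → Prop := fun s p => var p ∈ s.1.1

/-- The truth lemma for the canonical model. -/
lemma truth_lemma {Φ : Finset Formula} (hsub : SubClosed Φ) (hsim : SimClosed Φ) :
    ∀ (ψ : Formula), ψ ∈ Φ → ∀ s : CWorld Φ,
      (Forces (crel Φ) (cval Φ) s ψ ↔ ψ ∈ s.1.1)
  | var p, _, s => Iff.rfl
  | bot, _, s => by
      constructor
      · intro hf; exact absurd hf id
      · intro hmem
        exact absurd (Deriv.hyp (Finset.mem_coe.2 hmem)) s.1.2.2.1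
  | imp a b, hψ, s => by
      obtain ⟨ha, hb⟩ := hsub.1 a b hψ
      have iha := truth_lemma hsub hsim a ha s
      have ihb := truth_lemma hsub hsim b hb s
      rw [mem_imp_iff hsub s.1.2 hψ]
      exact ⟨fun hf hm => ihb.1 (hf (iha.2 hm)), fun hf hm => ihb.2 (hf (iha.1 hm))⟩
  | tri a b, hψ, s => by
      obtain ⟨haΦ, hbΦ⟩ := hsub.2 a b hψ
      constructor
      · intro hf
        by_contra hmem
        have hneg : simNeg (tri a b) ∈ s.1.1 := by
          rcases s.1.2.2.2 _ hψ with h | h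
          · exact absurd h hmem
          · exact h
        have hnd : ¬ Deriv true ↑(s.1.1) (tri a b) := fun hd =>
          notMem_of_simNeg_mem s.1.2 hneg hd
        obtain ⟨u, hu, hau, hconsu⟩ := succ_exists hsim haΦ hnd
        have hins : insert (simNeg b) (Dset Φ s.1.1 u) ⊆ Φ :=
          Finset.insert_subset (hsim b hbΦ) (fun x hx => (mem_Dset.1 hx).1)
        have hex : ∃ v : Finset Formula, MaxCons true Φ v ∧ Dset Φ s.1.1 u ⊆ v ∧ b ∉ v := by
          obtain ⟨v, hvmc, hvS⟩ := lindenbaum hsim hins hconsu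
          refine ⟨v, hvmc, (Finset.subset_insert _ _).trans hvS, ?_⟩
          intro hbv
          exact notMem_of_simNeg_mem hvmc (hvS (Finset.mem_insert_self _ _))
            (Deriv.hyp (Finset.mem_coe.2 hbv))
        obtain ⟨vv, hvv⟩ := succOpt_eq_some hex
        have hspec := succOpt_spec hvv
        have hrel : crel Φ s (⟨u, hu⟩, ⟨b, hbΦ⟩) (⟨vv, hspec.1⟩, ⟨b, hbΦ⟩) := ⟨hvv, rfl⟩
        have hfa : Forces (crel Φ) (cval Φ) (⟨u, hu⟩, ⟨b, hbΦ⟩) a :=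
          (truth_lemma hsub hsim a haΦ _).2 hau
        obtain ⟨v'', hrel'', hfb⟩ := hf _ _ hrel hfa
        have heq : v''.1.1 = vv := Option.some.inj (hrel''.1.symm.trans hvv)
        have hbv : b ∈ v''.1.1 := (truth_lemma hsub hsim b hbΦ v'').1 hfb
        rw [heq] at hbv
        exact hspec.2.2 hbv
      · intro hmem u v hrel hfa
        have hau : a ∈ u.1.1 := (truth_lemma hsub hsim a haΦ u).1 hfa
        have hspec := succOpt_spec hrel.1
        have hbD : b ∈ Dset Φ s.1.1 u.1.1 :=
          mem_Dset.2 ⟨hbΦ, deriv_tri_bigConj hau (Deriv.hyp (Finset.mem_coe.2 hmem))⟩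
        exact ⟨v, hrel, (truth_lemma hsub hsim b hbΦ v).2 (hspec.2.1 hbD)⟩

/-! ### The closure of a formula -/

/-- Subformulas. -/
def subs : Formula → Finset Formula
  | var n => {var n}
  | bot => {bot}
  | imp a b => insert (imp a b) (subs a ∪ subs b)
  | tri a b => insert (tri a b) (subs a ∪ subs b)

lemma mem_subs_self : ∀ φ : Formula, φ ∈ subs φ
  | var n => by simp [subs]
  | bot => by simp [subs]
  | imp a b => by simp [subs]
  | tri a b => by simp [subs]

lemma subs_subclosed : ∀ φ : Formula, SubClosed (subs φ)
  | var n => by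
      constructor <;> intro a b h <;> simp [subs] at h
  | bot => by
      constructor <;> intro a b h <;> simp [subs] at h
  | imp c d => by
      obtain ⟨ihc1, ihc2⟩ := subs_subclosed c
      obtain ⟨ihd1, ihd2⟩ := subs_subclosed d
      constructor
      · intro a b h
        rcases Finset.mem_insert.1 h with h | h
        · obtain ⟨rfl, rfl⟩ : a = c ∧ b = d := by
            injection h with h1 h2; exact ⟨h1, h2⟩
          exact ⟨Finset.mem_insert_of_mem (Finset.mem_union_left _ (mem_subs_self a)),
            Finset.mem_insert_of_mem (Finset.mem_union_right _ (mem_subs_self b))⟩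
        · rcases Finset.mem_union.1 h with h | h
          · obtain ⟨h1, h2⟩ := ihc1 a b h
            exact ⟨Finset.mem_insert_of_mem (Finset.mem_union_left _ h1),
              Finset.mem_insert_of_mem (Finset.mem_union_left _ h2)⟩
          · obtain ⟨h1, h2⟩ := ihd1 a b h
            exact ⟨Finset.mem_insert_of_mem (Finset.mem_union_right _ h1),
              Finset.mem_insert_of_mem (Finset.mem_union_right _ h2)⟩
      · intro a b h
        rcases Finset.mem_insert.1 h with h | h
        · exact absurd h (by simp)
        · rcases Finset.mem_union.1 h with h | h
          · obtain ⟨h1, h2⟩ := ihc2 a b h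
            exact ⟨Finset.mem_insert_of_mem (Finset.mem_union_left _ h1),
              Finset.mem_insert_of_mem (Finset.mem_union_left _ h2)⟩
          · obtain ⟨h1, h2⟩ := ihd2 a b h
            exact ⟨Finset.mem_insert_of_mem (Finset.mem_union_right _ h1),
              Finset.mem_insert_of_mem (Finset.mem_union_right _ h2)⟩
  | tri c d => by
      obtain ⟨ihc1, ihc2⟩ := subs_subclosed c
      obtain ⟨ihd1, ihd2⟩ := subs_subclosed d
      constructor
      · intro a b h
        rcases Finset.mem_insert.1 h with h | h
        · exact absurd h (by simp)
        · rcases Finset.mem_union.1 h with h | h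
          · obtain ⟨h1, h2⟩ := ihc1 a b h
            exact ⟨Finset.mem_insert_of_mem (Finset.mem_union_left _ h1),
              Finset.mem_insert_of_mem (Finset.mem_union_left _ h2)⟩
          · obtain ⟨h1, h2⟩ := ihd1 a b h
            exact ⟨Finset.mem_insert_of_mem (Finset.mem_union_right _ h1),
              Finset.mem_insert_of_mem (Finset.mem_union_right _ h2)⟩
      · intro a b h
        rcases Finset.mem_insert.1 h with h | h
        · obtain ⟨rfl, rfl⟩ : a = c ∧ b = d := by
            injection h with h1 h2; exact ⟨h1, h2⟩
          exact ⟨Finset.mem_insert_of_mem (Finset.mem_union_left _ (mem_subs_self a)),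
            Finset.mem_insert_of_mem (Finset.mem_union_right _ (mem_subs_self b))⟩
        · rcases Finset.mem_union.1 h with h | h
          · obtain ⟨h1, h2⟩ := ihc2 a b h
            exact ⟨Finset.mem_insert_of_mem (Finset.mem_union_left _ h1),
              Finset.mem_insert_of_mem (Finset.mem_union_left _ h2)⟩
          · obtain ⟨h1, h2⟩ := ihd2 a b h
            exact ⟨Finset.mem_insert_of_mem (Finset.mem_union_right _ h1),
              Finset.mem_insert_of_mem (Finset.mem_union_right _ h2)⟩

/-- Case analysis for simNeg. -/
lemma simNeg_cases (a : Formula) :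
    (∃ χ, a = imp χ bot ∧ simNeg a = χ) ∨ simNeg a = neg a := by
  cases a with
  | var n => exact Or.inr rfl
  | bot => exact Or.inr rfl
  | tri a b => exact Or.inr rfl
  | imp a b =>
      cases b with
      | bot => exact Or.inl ⟨a, rfl, rfl⟩
      | var n => exact Or.inr rfl
      | imp c d => exact Or.inr rfl
      | tri c d => exact Or.inr rfl

/-- The closure of a formula: subformulas, ⊥, and their negations. -/
def cl (φ : Formula) : Finset Formula :=
  insert bot (subs φ) ∪ (insert bot (subs φ)).image neg

lemma mem_cl_self (φ : Formula) : φ ∈ cl φ :=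
  Finset.mem_union_left _ (Finset.mem_insert_of_mem (mem_subs_self φ))

lemma cl_subclosed (φ : Formula) : SubClosed (cl φ) := by
  have hS : SubClosed (subs φ) := subs_subclosed φ
  have hlift : ∀ x, x ∈ insert bot (subs φ) → x ∈ cl φ := fun x hx =>
    Finset.mem_union_left _ hx
  constructor
  · intro a b h
    rcases Finset.mem_union.1 h with h | h
    · rcases Finset.mem_insert.1 h with h | h
      · exact absurd h (by simp)
      · obtain ⟨h1, h2⟩ := hS.1 a b h
        exact ⟨hlift a (Finset.mem_insert_of_mem h1), hlift b (Finset.mem_insert_of_mem h2)⟩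
    · obtain ⟨ψ, hψ, heq⟩ := Finset.mem_image.1 h
      obtain ⟨rfl, rfl⟩ : a = ψ ∧ b = bot := by
        rw [neg] at heq
        injection heq.symm with h1 h2; exact ⟨h1, h2⟩
      exact ⟨hlift a hψ, hlift bot (Finset.mem_insert_self _ _)⟩
  · intro a b h
    rcases Finset.mem_union.1 h with h | h
    · rcases Finset.mem_insert.1 h with h | h
      · exact absurd h (by simp)
      · obtain ⟨h1, h2⟩ := hS.2 a b h
        exact ⟨hlift a (Finset.mem_insert_of_mem h1), hlift b (Finset.mem_insert_of_mem h2)⟩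
    · obtain ⟨ψ, hψ, heq⟩ := Finset.mem_image.1 h
      exact absurd heq (by simp [neg])

lemma cl_simclosed (φ : Formula) : SimClosed (cl φ) := by
  intro ψ hψ
  have hlift : ∀ x, x ∈ insert bot (subs φ) → x ∈ cl φ := fun x hx =>
    Finset.mem_union_left _ hx
  rcases Finset.mem_union.1 hψ with h | h
  · rcases simNeg_cases ψ with ⟨χ, rfl, hsn⟩ | hsn
    · rw [hsn]
      rcases Finset.mem_insert.1 h with h' | h'
      · exact absurd h' (by simp)
      · exact hlift χ (Finset.mem_insert_of_mem ((subs_subclosed φ).1 χ bot h').1)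
    · rw [hsn]
      exact Finset.mem_union_right _ (Finset.mem_image_of_mem neg h)
  · obtain ⟨χ, hχ, rfl⟩ := Finset.mem_image.1 h
    have : simNeg (neg χ) = χ := rfl
    rw [this]
    exact hlift χ hχ

/-- Kripke completeness of ℜ_d: an unprovable formula has a finite
deterministic countermodel. -/
theorem completeness_Rd {φ : Formula} (h : ¬ Prv true φ) :
    ∃ M : KripkeModel, M.Deterministic ∧ ∃ w : M.W, ¬ M.Forces w φ := by
  classical
  have hsub : SubClosed (cl φ) := cl_subclosed φ
  have hsim : SimClosed (cl φ) := cl_simclosed φ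
  have hφ : φ ∈ cl φ := mem_cl_self φ
  have hScons : Consistent true ↑({simNeg φ} : Finset Formula) := by
    intro hd
    apply h
    have hd' : Deriv true (insert (simNeg φ) (∅ : Set Formula)) bot := by
      apply Deriv.mono_set _ hd
      intro x hx
      simp at hx
      simp [hx]
    have hprv : Prv true (imp (simNeg φ) bot) := Deriv.of_prv_empty (Deriv.deduction hd')
    refine Prv.mp (Prv.taut fun v hb hi => ?_) hprv
    simp only [hi, bv_simNeg hb hi, hb]
    cases v φ <;> simp
  obtain ⟨w0, hw0, hsw0⟩ :=
    lindenbaum hsim (Finset.singleton_subset_iff.2 (hsim φ hφ)) hScons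
  have hφw0 : φ ∉ w0 := fun hmem =>
    notMem_of_simNeg_mem hw0 (hsw0 (Finset.mem_singleton_self _))
      (Deriv.hyp (Finset.mem_coe.2 hmem))
  refine ⟨⟨CWorld (cl φ), inferInstance, crel (cl φ), cval (cl φ)⟩, ?_,
    ⟨(⟨w0, hw0⟩, ⟨φ, hφ⟩), ?_⟩⟩
  · rintro s u v v' ⟨h1, h2⟩ ⟨h1', h2'⟩
    refine Prod.ext ?_ ?_
    · exact Subtype.ext (Option.some.inj (h1.symm.trans h1'))
    · exact h2.trans h2'.symm
  · intro hf
    exact hφw0 ((truth_lemma hsub hsim φ hφ _).1 hf)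

end Formula


/-! ### Part IV : arithmetical semantics -/

namespace Formula

lemma semD_imp_mem {val : ℕ → Set ℕ} {a b : Formula} {n : ℕ} :
    n ∈ semD val (imp a b) ↔ (n ∈ semD val a → n ∈ semD val b) := by
  simp only [semD, Set.mem_union, Set.mem_diff, Set.mem_univ, true_and]
  tauto

lemma semD_bot {val : ℕ → Set ℕ} : semD val bot = (∅ : Set ℕ) := rfl

lemma semD_neg_mem {val : ℕ → Set ℕ} {a : Formula} {n : ℕ} :
    n ∈ semD val (neg a) ↔ n ∉ semD val a := by
  rw [neg, semD_imp_mem]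
  simp [semD_bot]

lemma semD_top {val : ℕ → Set ℕ} : semD val top = Set.univ := by
  ext n
  simp [top, semD_neg_mem, semD_bot]

lemma semD_conj_mem {val : ℕ → Set ℕ} {a b : Formula} {n : ℕ} :
    n ∈ semD val (conj a b) ↔ n ∈ semD val a ∧ n ∈ semD val b := by
  rw [conj, semD_neg_mem, semD_imp_mem]
  simp only [semD_neg_mem]
  tauto

lemma semD_disj_mem {val : ℕ → Set ℕ} {a b : Formula} {n : ℕ} :
    n ∈ semD val (disj a b) ↔ n ∈ semD val a ∨ n ∈ semD val b := by
  rw [disj, semD_imp_mem]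
  simp only [semD_neg_mem]
  tauto

lemma semD_tri_mem {val : ℕ → Set ℕ} {a b : Formula} {w : ℕ} :
    w ∈ semD val (tri a b) ↔
      ∀ u ∈ semD val a, ∀ h : (xi w u).Dom, (xi w u).get h ∈ semD val b :=
  Iff.rfl

/-- Arithmetical soundness of ℜ_d. -/
theorem soundness_arith {φ : Formula} (h : Prv true φ) (val : ℕ → Set ℕ) :
    semD val φ = Set.univ := by
  have key : ∀ {d : Bool} {ψ : Formula}, Prv d ψ → ∀ n : ℕ, n ∈ semD val ψ := by
    intro d ψ hp
    induction hp with
    | taut htaut =>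
        intro n
        classical
        have hv := htaut (fun χ => decide (n ∈ semD val χ)) (by simp [semD_bot])
          (fun a b => by
            by_cases h1 : n ∈ semD val a <;> by_cases h2 : n ∈ semD val b <;>
              simp [h1, h2, semD_imp_mem])
        simpa using hv
    | a1 a b c =>
        intro n
        rw [semD_imp_mem]
        intro h1
        rw [semD_imp_mem]
        intro h2
        rw [semD_tri_mem] at h1 h2 ⊢
        intro u hu hd
        rcases semD_disj_mem.1 hu with hu' | hu'
        · exact h1 u hu' hd
        · exact h2 u hu' hd
    | a2 a =>
        intro n
        rw [semD_tri_mem]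
        intro u hu
        exact absurd hu (by simp [semD_bot])
    | a3 a =>
        intro n
        rw [semD_tri_mem]
        intro u hu hd
        simp [semD_top]
    | a4 a b c =>
        intro n
        rw [semD_imp_mem]
        intro h1
        rw [semD_imp_mem]
        intro h2
        rw [semD_tri_mem] at h1 h2 ⊢
        intro u hu hd
        exact semD_conj_mem.2 ⟨h1 u hu hd, h2 u hu hd⟩
    | mp h1 h2 ih1 ih2 =>
        intro n
        exact semD_imp_mem.1 (ih1 n) (ih2 n)
    | mono h1 h2 ih1 ih2 =>
        intro n
        rw [semD_imp_mem]
        intro hn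
        rw [semD_tri_mem] at hn ⊢
        intro u hu hd
        exact semD_imp_mem.1 (ih2 _) (hn u (semD_imp_mem.1 (ih1 u) hu) hd)
  exact Set.eq_univ_of_forall (key h)

end Formula


namespace Formula

open Nat.Partrec (Code)
open Nat.Partrec.Code

/-- Interpreter of a finite machine-behaviour table. -/
def embedFun (k : ℕ) (T : List (List ℕ)) (c : Code) (n : ℕ) : Option ℕ :=
  ((T[n.unpair.1]?).bind
    (fun row => row[
      (((List.range k).map (fun j => Encodable.encode (curry c j))).idxOf n.unpair.2)]?)).bind
    (fun entry => match entry with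
      | 0 => none
      | m + 1 => some (Encodable.encode (curry c m)))

lemma embedFun_primrec (k : ℕ) (T : List (List ℕ)) :
    Primrec fun p : Code × ℕ => embedFun k T p.1 p.2 := by
  have hcurry : Primrec₂ (fun (c : Code) (j : ℕ) => Encodable.encode (curry c j)) :=
    Primrec.encode.comp primrec₂_curry
  have hL : Primrec (fun c : Code =>
      (List.range k).map (fun j => Encodable.encode (curry c j))) :=
    Primrec.list_map (Primrec.const (List.range k)) hcurry
  have hidx : Primrec (fun p : Code × ℕ =>
      ((List.range k).map (fun j => Encodable.encode (curry p.1 j))).idxOf p.2.unpair.2) :=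
    Primrec.list_idxOf.comp (Primrec.snd.comp (Primrec.unpair.comp Primrec.snd))
      (hL.comp Primrec.fst)
  have hrow : Primrec (fun p : Code × ℕ => T[p.2.unpair.1]?) :=
    Primrec.list_getElem?.comp (Primrec.const T)
      (Primrec.fst.comp (Primrec.unpair.comp Primrec.snd))
  have hlook : Primrec (fun p : Code × ℕ => (T[p.2.unpair.1]?).bind (fun row => row[
      (((List.range k).map (fun j => Encodable.encode (curry p.1 j))).idxOf p.2.unpair.2)]?)) :=
    Primrec.option_bind hrow
      (Primrec.list_getElem?.comp Primrec.snd (hidx.comp Primrec.fst)).to₂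
  have hmatch : Primrec₂ (fun (p : Code × ℕ) (entry : ℕ) =>
      (match entry with
        | 0 => (none : Option ℕ)
        | m + 1 => some (Encodable.encode (curry p.1 m)))) := by
    have := Primrec.nat_casesOn (Primrec.snd : Primrec fun q : (Code × ℕ) × ℕ => q.2)
      (Primrec.const (none : Option ℕ))
      ((Primrec.option_some.comp (Primrec.encode.comp
        (primrec₂_curry.comp (Primrec.fst.comp (Primrec.fst.comp Primrec.fst)) Primrec.snd))).to₂ :
          Primrec₂ fun (q : (Code × ℕ) × ℕ) (m : ℕ) => some (Encodable.encode (curry q.1.1 m)))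
    exact this.to₂.of_eq (fun q e => by cases e <;> rfl)
  exact (Primrec.option_bind hlook hmatch).of_eq (fun p => rfl)

lemma embedFun_fixed (k : ℕ) (T : List (List ℕ)) :
    ∃ c : Code, ∀ n, eval c n = Part.ofOption (embedFun k T c n) := by
  have hpr : _root_.Partrec₂ (fun (c : Code) (n : ℕ) => Part.ofOption (embedFun k T c n)) :=
    Computable.ofOption ((embedFun_primrec k T).to_comp :
      Computable fun p : Code × ℕ => embedFun k T p.1 p.2)
  obtain ⟨c, hc⟩ := fixed_point₂ hpr
  exact ⟨c, fun n => by rw [hc]⟩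

/-- Embedding a finite deterministic Kripke countermodel into the
deterministic arithmetical semantics. -/
theorem kripke_to_arith (M : KripkeModel) (hdet : M.Deterministic)
    {φ : Formula} (w0 : M.W) (hw0 : ¬ M.Forces w0 φ) :
    ∃ val : ℕ → Set ℕ, semD val φ ≠ Set.univ := by
  classical
  haveI : Finite M.W := M.fin
  haveI : Fintype M.W := Fintype.ofFinite M.W
  set k := Fintype.card M.W with hk
  set e : M.W ≃ Fin k := Fintype.equivFin M.W with he
  set relf : ℕ → ℕ → Option ℕ := fun i j =>
    if hij : i < k ∧ j < k then
      if h : ∃ m : Fin k, M.rel (e.symm ⟨i, hij.1⟩) (e.symm ⟨j, hij.2⟩) (e.symm m) then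
        some ((h.choose : Fin k) : ℕ)
      else none
    else none with hrelf
  set T : List (List ℕ) := (List.range k).map (fun i => (List.range k).map (fun j =>
    match relf i j with | some m => m + 1 | none => 0)) with hT
  obtain ⟨c, hc⟩ := embedFun_fixed k T
  set A : Fin k → ℕ := fun i => Encodable.encode (curry c (i : ℕ)) with hA
  have hAinj : Function.Injective A := by
    intro i j hij
    exact Fin.ext (curry_inj (Encodable.encode_injective hij)).2
  set lst : List ℕ := (List.range k).map (fun j => Encodable.encode (curry c j)) with hlst
  have hlst_len : lst.length = k := by simp [hlst]
  have hlst_get : ∀ j : Fin k, lst[(j : ℕ)]? = some (A j) := by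
    intro j
    rw [hlst, List.getElem?_map, List.getElem?_range j.2]
    rfl
  have hlst_nodup : lst.Nodup := by
    rw [hlst]
    refine List.Nodup.map ?_ List.nodup_range
    intro x y hxy
    exact (curry_inj (Encodable.encode_injective hxy)).2
  have hidxA : ∀ j : Fin k, lst.idxOf (A j) = (j : ℕ) := by
    intro j
    have hmem : A j ∈ lst := by
      rw [hlst]
      exact List.mem_map.2 ⟨(j : ℕ), List.mem_range.2 j.2, rfl⟩
    have h1 : lst[lst.idxOf (A j)]? = some (A j) := List.getElem?_idxOf hmem
    have hlt : lst.idxOf (A j) < lst.length := List.idxOf_lt_length_iff.2 hmem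
    have h2 : lst[lst.idxOf (A j)]? = lst[(j : ℕ)]? := by
      rw [h1, hlst_get j]
    refine (List.getElem?_inj hlt hlst_nodup).1 ?_
    rw [h1, hlst_get j]
  have hxi : ∀ (i : Fin k) (u : ℕ),
      xi (A i) u = Part.ofOption (embedFun k T c (Nat.pair (i : ℕ) u)) := by
    intro i u
    show eval (Denumerable.ofNat Code (A i)) u = _
    rw [hA]
    rw [show Denumerable.ofNat Code (Encodable.encode (curry c (i : ℕ))) = curry c (i : ℕ) from
      Denumerable.ofNat_encode _]
    rw [eval_curry, hc]
  have hTlook : ∀ (i j : Fin k), (T[(i : ℕ)]?).bind (fun row => row[(j : ℕ)]?) =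
      some (match relf (i : ℕ) (j : ℕ) with | some m => m + 1 | none => 0) := by
    intro i j
    rw [hT, List.getElem?_map, List.getElem?_range i.2]
    show ((List.range k).map _)[(j : ℕ)]? = _
    rw [List.getElem?_map, List.getElem?_range j.2]
    rfl
  have hstep : ∀ (i j : Fin k), embedFun k T c (Nat.pair (i : ℕ) (A j)) =
      (match relf (i : ℕ) (j : ℕ) with
        | some m => some (Encodable.encode (curry c m))
        | none => none) := by
    intro i j
    unfold embedFun
    rw [Nat.unpair_pair]
    show ((T[(i : ℕ)]?).bind (fun row => row[lst.idxOf (A j)]?)).bind _ = _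
    rw [hidxA j, hTlook i j]
    cases hr : relf (i : ℕ) (j : ℕ) with
    | some m => rfl
    | none => rfl
  have hrelf_some : ∀ (i j m : Fin k), M.rel (e.symm i) (e.symm j) (e.symm m) →
      relf (i : ℕ) (j : ℕ) = some (m : ℕ) := by
    intro i j m hrel
    have hij : (i : ℕ) < k ∧ (j : ℕ) < k := ⟨i.2, j.2⟩
    have hex : ∃ m' : Fin k,
        M.rel (e.symm ⟨(i : ℕ), hij.1⟩) (e.symm ⟨(j : ℕ), hij.2⟩) (e.symm m') :=
      ⟨m, by simpa using hrel⟩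
    simp only [hrelf]
    rw [dif_pos hij, dif_pos hex]
    have hrel' : M.rel (e.symm i) (e.symm j) (e.symm hex.choose) := by
      have := hex.choose_spec
      simpa using this
    have : e.symm hex.choose = e.symm m := hdet _ _ _ _ hrel' hrel
    rw [e.symm.injective this]
  have hrelf_inv : ∀ (i j : Fin k) (m : ℕ), relf (i : ℕ) (j : ℕ) = some m →
      ∃ hm : m < k, M.rel (e.symm i) (e.symm j) (e.symm ⟨m, hm⟩) := by
    intro i j m hsome
    simp only [hrelf] at hsome
    have hij : (i : ℕ) < k ∧ (j : ℕ) < k := ⟨i.2, j.2⟩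
    rw [dif_pos hij] at hsome
    by_cases hex : ∃ m' : Fin k,
        M.rel (e.symm ⟨(i : ℕ), hij.1⟩) (e.symm ⟨(j : ℕ), hij.2⟩) (e.symm m')
    · rw [dif_pos hex] at hsome
      obtain rfl : ((hex.choose : Fin k) : ℕ) = m := Option.some.inj hsome
      refine ⟨hex.choose.2, ?_⟩
      have := hex.choose_spec
      simpa using this
    · rw [dif_neg hex] at hsome
      exact absurd hsome (by simp)
  have hsomeE : ∀ (i j m : Fin k), M.rel (e.symm i) (e.symm j) (e.symm m) →
      xi (A i) (A j) = Part.some (A m) := by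
    intro i j m hrel
    rw [hxi, hstep, hrelf_some i j m hrel]
    rfl
  have hdomE : ∀ (i : Fin k) (u : ℕ) (h : (xi (A i) u).Dom),
      ∃ (j m : Fin k), u = A j ∧ (xi (A i) u).get h = A m ∧
        M.rel (e.symm i) (e.symm j) (e.symm m) := by
    intro i u h
    obtain ⟨z, hz⟩ := Part.dom_iff_mem.1 h
    have hz' : z ∈ embedFun k T c (Nat.pair (i : ℕ) u) := by
      rw [hxi] at hz
      exact Part.mem_ofOption.1 hz
    have hsome : embedFun k T c (Nat.pair (i : ℕ) u) = some z := hz'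
    unfold embedFun at hsome
    rw [Nat.unpair_pair] at hsome
    obtain ⟨entry, hlook, hmatch⟩ := Option.bind_eq_some_iff.1 hsome
    obtain ⟨row, hrowT, hrowget⟩ := Option.bind_eq_some_iff.1 hlook
    -- u is in lst
    have hulst : u ∈ lst := by
      by_contra humem
      have : lst.idxOf u = lst.length := List.idxOf_eq_length_iff.2 humem
      rw [← hlst] at hrowget
      rw [this] at hrowget
      have hrowlen : row.length = k := by
        rw [hT, List.getElem?_map, List.getElem?_range i.2] at hrowT
        obtain rfl := Option.some.inj hrowT
        simp
      have := List.getElem?_eq_none (le_of_eq (by rw [hrowlen, hlst_len]) : row.length ≤ lst.length)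
      rw [this] at hrowget
      exact absurd hrowget (by simp)
    obtain ⟨j', hj'range, hj'⟩ := List.mem_map.1 (by rw [hlst] at hulst; exact hulst)
    have hj'k : j' < k := List.mem_range.1 hj'range
    set j : Fin k := ⟨j', hj'k⟩ with hj
    have huA : u = A j := by rw [hA]; exact hj'.symm
    subst huA
    -- compute the entry
    rw [← hlst, hidxA j] at hrowget
    rw [hT, List.getElem?_map, List.getElem?_range i.2] at hrowT
    obtain rfl := Option.some.inj hrowT
    rw [List.getElem?_map, List.getElem?_range j.2] at hrowget
    have hentry : (match relf (i : ℕ) (j : ℕ) with | some m => m + 1 | none => 0) = entry :=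
      Option.some.inj hrowget
    -- entry must be m + 1
    cases hr : relf (i : ℕ) (j : ℕ) with
    | none => rw [hr] at hentry; subst hentry; exact absurd hmatch (by simp)
    | some m =>
        rw [hr] at hentry
        subst hentry
        have hzval : z = Encodable.encode (curry c m) := by
          have : some (Encodable.encode (curry c m)) = some z := hmatch
          exact (Option.some.inj this).symm
        obtain ⟨hm, hrel⟩ := hrelf_inv i j m hr
        refine ⟨j, ⟨m, hm⟩, rfl, ?_, hrel⟩
        rw [Part.get_eq_of_mem hz h]
        rw [hzval]
  -- the valuation
  set val : ℕ → Set ℕ := fun p => {n | ∃ i : Fin k, n = A i ∧ M.val (e.symm i) p} with hval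
  have main : ∀ (ψ : Formula) (i : Fin k),
      A i ∈ semD val ψ ↔ Formula.Forces M.rel M.val (e.symm i) ψ := by
    intro ψ
    induction ψ with
    | var p =>
        intro i
        show (∃ i' : Fin k, A i = A i' ∧ M.val (e.symm i') p) ↔ M.val (e.symm i) p
        constructor
        · rintro ⟨i', heq, hv⟩
          rwa [← hAinj heq] at hv
        · intro hv
          exact ⟨i, rfl, hv⟩
    | bot => intro i; simp [semD_bot, Forces]
    | imp a b iha ihb =>
        intro i
        rw [semD_imp_mem]
        show _ ↔ (Formula.Forces M.rel M.val (e.symm i) a → Formula.Forces M.rel M.val (e.symm i) b)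
        rw [iha i, ihb i]
    | tri a b iha ihb =>
        intro i
        rw [semD_tri_mem]
        constructor
        · intro hsem u v hrel hfu
          have hj : A (e u) ∈ semD val a := (iha (e u)).2 (by rwa [e.symm_apply_apply])
          have hrel' : M.rel (e.symm i) (e.symm (e u)) (e.symm (e v)) := by
            rwa [e.symm_apply_apply, e.symm_apply_apply]
          have hxi1 : xi (A i) (A (e u)) = Part.some (A (e v)) := hsomeE i (e u) (e v) hrel'
          have hdom : (xi (A i) (A (e u))).Dom := by rw [hxi1]; trivial
          have hget : (xi (A i) (A (e u))).get hdom = A (e v) := by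
            rw [Part.get_eq_of_mem _ hdom]
            rw [hxi1]
            exact Part.mem_some _
          have hmem := hsem (A (e u)) hj hdom
          rw [hget] at hmem
          refine ⟨v, hrel, ?_⟩
          have := (ihb (e v)).1 hmem
          rwa [e.symm_apply_apply] at this
        · intro hf u hu hdom
          obtain ⟨j, m, rfl, hget, hrel⟩ := hdomE i u hdom
          have hfa : Formula.Forces M.rel M.val (e.symm j) a := (iha j).1 hu
          obtain ⟨v', hrel', hfb⟩ := hf (e.symm j) (e.symm m) hrel hfa
          have hveq : v' = e.symm m := hdet _ _ _ _ hrel' hrel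
          rw [hget]
          exact (ihb m).2 (hveq ▸ hfb)
  refine ⟨val, fun heq => hw0 ?_⟩
  have hmem : A (e w0) ∈ semD val φ := by rw [heq]; trivial
  have := (main φ (e w0)).1 hmem
  rwa [e.symm_apply_apply] at this

end Formula


open Formula in
/-- Main theorem for ℜ_d: for every formula φ the following are equivalent:
(1) φ is a tautology of the enumeration ξ of deterministic partial recursive
functions; (2) φ is forced at every world of every deterministic Kripke
model; (3) φ is a theorem of ℜ_d. -/
theorem grand_Rd (φ : Formula) :
    List.TFAE [
      ∀ val : ℕ → Set ℕ, semD val φ = Set.univ,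
      ∀ (M : KripkeModel), M.Deterministic → ∀ w : M.W, M.Forces w φ,
      Prv true φ ] := by
  tfae_have 3 → 1 := fun h val => Formula.soundness_arith h val
  tfae_have 1 → 2 := by
    intro h1 M hdet w
    by_contra hw
    obtain ⟨val, hval⟩ := Formula.kripke_to_arith M hdet w hw
    exact hval (h1 val)
  tfae_have 2 → 3 := by
    intro h2
    by_contra h3
    obtain ⟨M, hdet, w, hw⟩ := Formula.completeness_Rd h3
    exact hw (h2 M hdet w)
  tfae_finish
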